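/- For every integer s with 1 ≤ s ≤ n − 1, the sum over all k ∈ ℤ/(2^n − 1)ℤ of the s-th power of the left multiplication operator L_τ(c_k) is the zero endomorphism of Fin n → K: ∑_{k ∈ ℤ/(2^n−1)ℤ} (L_τ(c_k))^s = 0. -/

import Mathlib

open Fin.NatCast

/-- For `1 ≤ s ≤ n − 1`, the sum over all `k ∈ ℤ/(2^n − 1)ℤ` of the `s`-th power of the
left multiplication operators `L_τ(c_k)` vanishes. -/
theorem stmt_14 {K : Type*} [Field K] (n : ℕ) [NeZero n] [NeZero (2 ^ n - 1)] (hn : 2 ≤ n)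
    (ζ : K) (hζ : IsPrimitiveRoot ζ (2 ^ n - 1))
    (c : ZMod (2 ^ n - 1) → Fin n → K)
    (hc : ∀ k (i : Fin n), c k i = ζ ^ ((2 ^ (n - 1 - (i : ℕ)) * k : ZMod (2 ^ n - 1)).val))
    (L : ZMod (2 ^ n - 1) → Module.End K (Fin n → K))
    (hL : ∀ k (x : Fin n → K) (i : Fin n), L k x i = c k (i + 1) * x (i + 1))
    (s : ℕ) (hs1 : 1 ≤ s) (hs2 : s ≤ n - 1) :
    ∑ k : ZMod (2 ^ n - 1), (L k) ^ s = 0 := by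
  have h4 : 4 ≤ 2 ^ n := by
    calc (4:ℕ) = 2 ^ 2 := rfl
    _ ≤ 2 ^ n := Nat.pow_le_pow_right (by norm_num) hn
  have hN1 : 1 < 2 ^ n - 1 := by omega
  -- power formula
  have hpow : ∀ (k : ZMod (2 ^ n - 1)) (s : ℕ) (x : Fin n → K) (i : Fin n),
      ((L k ^ s) x) i = (∏ j ∈ Finset.range s, c k (i + (j : Fin n) + 1)) * x (i + (s : Fin n)) := by
    intro k s
    induction s with
    | zero => intro x i; simp
    | succ t ih =>
      intro x i
      rw [pow_succ, Module.End.mul_apply, ih, hL, Finset.prod_range_succ,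
        Nat.cast_add, Nat.cast_one, ← add_assoc]
      exact (mul_assoc _ _ _).symm
  -- homomorphism property of a ↦ ζ ^ a.val
  have hmul : ∀ a b : ZMod (2 ^ n - 1), ζ ^ (a + b).val = ζ ^ a.val * ζ ^ b.val := by
    intro a b
    rw [ZMod.val_add, ← pow_add]
    exact (pow_eq_pow_mod _ hζ.pow_eq_one).symm
  have hprod : ∀ (t : Finset ℕ) (g : ℕ → ZMod (2 ^ n - 1)),
      ∏ j ∈ t, ζ ^ (g j).val = ζ ^ (∑ j ∈ t, g j).val := by
    intro t g
    induction t using Finset.induction with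
    | empty => simp
    | insert _ _ hj ih => rw [Finset.prod_insert hj, Finset.sum_insert hj, hmul, ih]
  apply LinearMap.ext
  intro x
  funext i
  simp only [LinearMap.sum_apply, Finset.sum_apply, LinearMap.zero_apply, Pi.zero_apply,
    hpow, ← Finset.sum_mul]
  -- define exponents
  set e : ℕ → ℕ := fun j => n - 1 - ((i + (j : Fin n) + 1 : Fin n) : ℕ) with he
  set m : ℕ := ∑ j ∈ Finset.range s, 2 ^ e j with hm
  have hvlt : ∀ j : ℕ, ((i + (j : Fin n) + 1 : Fin n) : ℕ) < n := fun j => Fin.is_lt _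
  have hinj : ∀ j ∈ Finset.range s, ∀ j' ∈ Finset.range s, e j = e j' → j = j' := by
    intro j hj j' hj' hee
    simp only [Finset.mem_range] at hj hj'
    have h1 := hvlt j
    have h2 := hvlt j'
    have hee' : n - 1 - ((i + (j : Fin n) + 1 : Fin n) : ℕ)
        = n - 1 - ((i + (j' : Fin n) + 1 : Fin n) : ℕ) := hee
    have hveq : ((i + (j : Fin n) + 1 : Fin n) : ℕ) = ((i + (j' : Fin n) + 1 : Fin n) : ℕ) := by
      omega
    have hfeq : (i + (j : Fin n) + 1 : Fin n) = (i + (j' : Fin n) + 1 : Fin n) := Fin.ext hveq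
    have hjj : (j : Fin n) = (j' : Fin n) := add_left_cancel (add_right_cancel hfeq)
    have hv : (j : Fin n).val = (j' : Fin n).val := by rw [hjj]
    rw [Fin.val_natCast, Fin.val_natCast] at hv
    have hjn : j < n := by omega
    have hj'n : j' < n := by omega
    rw [Nat.mod_eq_of_lt hjn, Nat.mod_eq_of_lt hj'n] at hv
    exact hv
  -- m bounds
  have hgeom : ∀ q : ℕ, ∑ t ∈ Finset.range q, 2 ^ t = 2 ^ q - 1 := by
    intro q
    induction q with
    | zero => simp
    | succ q ih =>
      rw [Finset.sum_range_succ, ih, pow_succ]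
      have := Nat.one_le_two_pow (n := q)
      omega
  have hmlt : m < 2 ^ n - 1 := by
    have him : m = ∑ t ∈ (Finset.range s).image e, 2 ^ t := (Finset.sum_image hinj).symm
    have hsub : (Finset.range s).image e ⊆ Finset.range n := by
      intro t ht
      simp only [Finset.mem_image, Finset.mem_range] at ht ⊢
      obtain ⟨j, _, rfl⟩ := ht
      exact Nat.lt_of_le_of_lt (Nat.sub_le _ _) (by omega)
    obtain ⟨t0, ht0, ht0n⟩ : ∃ t0 ∈ Finset.range n, t0 ∉ (Finset.range s).image e := by
      by_contra h
      push_neg at h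
      have hsub2 : Finset.range n ⊆ (Finset.range s).image e := fun t ht => h t ht
      have hcard := Finset.card_le_card hsub2
      have hcard2 : ((Finset.range s).image e).card ≤ s := Finset.card_image_le.trans (by simp)
      simp only [Finset.card_range] at hcard
      omega
    have hlt : ∑ t ∈ (Finset.range s).image e, 2 ^ t < ∑ t ∈ Finset.range n, 2 ^ t :=
      Finset.sum_lt_sum_of_subset hsub ht0 ht0n (Nat.two_pow_pos t0) (fun _ _ _ => Nat.zero_le _)
    rw [hgeom] at hlt
    omega
  have hmpos : 0 < m := by
    have h0 : (0:ℕ) ∈ Finset.range s := Finset.mem_range.mpr hs1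
    have hle : 2 ^ e 0 ≤ m :=
      Finset.single_le_sum (f := fun j => 2 ^ e j) (fun j _ => Nat.zero_le _) h0
    have := Nat.two_pow_pos (e 0)
    omega
  have hval : ((m : ZMod (2 ^ n - 1))).val = m := ZMod.val_cast_of_lt hmlt
  have hωne : ζ ^ m ≠ 1 := hζ.pow_ne_one_of_pos_of_lt hmpos.ne' hmlt
  have hωN : (ζ ^ m) ^ (2 ^ n - 1) = 1 := by
    rw [← pow_mul, mul_comm, pow_mul, hζ.pow_eq_one, one_pow]
  -- per-k computation
  have hper : ∀ k : ZMod (2 ^ n - 1),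
      ∏ j ∈ Finset.range s, c k (i + (j : Fin n) + 1) = (ζ ^ m) ^ k.val := by
    intro k
    have step1 : ∏ j ∈ Finset.range s, c k (i + (j : Fin n) + 1)
        = ∏ j ∈ Finset.range s, ζ ^ (((2 : ZMod (2 ^ n - 1)) ^ e j * k).val) := by
      apply Finset.prod_congr rfl
      intro j _
      rw [hc]
    rw [step1, hprod (Finset.range s) (fun j => (2 : ZMod (2 ^ n - 1)) ^ e j * k),
      ← Finset.sum_mul]
    have hMm : (∑ j ∈ Finset.range s, (2 : ZMod (2 ^ n - 1)) ^ e j) = (m : ZMod (2 ^ n - 1)) := by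
      rw [hm]
      push_cast
      rfl
    rw [hMm, ZMod.val_mul, hval, ← pow_eq_pow_mod _ hζ.pow_eq_one, pow_mul]
  rw [Finset.sum_congr rfl (fun k _ => hper k)]
  -- the character sum vanishes
  have hsum : ∑ k : ZMod (2 ^ n - 1), (ζ ^ m) ^ k.val = ∑ t ∈ Finset.range (2 ^ n - 1), (ζ ^ m) ^ t := by
    apply Finset.sum_nbij' (i := fun (k : ZMod (2 ^ n - 1)) => k.val)
      (j := fun t => (t : ZMod (2 ^ n - 1)))
    · intro a _; exact Finset.mem_range.mpr (ZMod.val_lt a)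
    · intro a _; exact Finset.mem_univ _
    · intro a _; exact ZMod.natCast_rightInverse a
    · intro a ha; exact ZMod.val_cast_of_lt (Finset.mem_range.mp ha)
    · intro a _; rfl
  rw [hsum]
  have hgs := geom_sum_mul (ζ ^ m) (2 ^ n - 1)
  rw [hωN, sub_self] at hgs
  rcases mul_eq_zero.mp hgs with h | h
  · rw [h, zero_mul]
  · exact absurd (sub_eq_zero.mp h) hωne
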